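/- There exists a fine subset of S². (For example, replacing each vertex of a regular inscribed tetrahedron by a generic triple of nearby points yields a fine set of 12 points.) -/

import Mathlib

open scoped RealInnerProductSpace
open Real

noncomputable section

/-- Euclidean 3-space. -/
abbrev E3 : Type := EuclideanSpace ℝ (Fin 3)

/-- The unit sphere S² in ℝ³. -/
def sphere2 : Set E3 := {x : E3 | ‖x‖ = 1}

/-- The round (geodesic) distance ρ(p,q) = arccos⟨p,q⟩ on S². -/
def rho (p q : E3) : ℝ := Real.arccos ⟪p, q⟫

/-- `UnitTangent p v` : `v` is a unit tangent vector at `p`. -/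
def UnitTangent (p v : E3) : Prop := ‖v‖ = 1 ∧ ⟪p, v⟫ = 0

/-- The unit-speed great-circle arc γ_{p,v}(t) = (cos t)·p + (sin t)·v. -/
def geo (p v : E3) (t : ℝ) : E3 := (Real.cos t) • p + (Real.sin t) • v
open Pointwise

/-- A great circle: the intersection of S² with a two-dimensional linear
subspace of ℝ³. -/
def GreatCircle (C : Set E3) : Prop :=
  ∃ P : Submodule ℝ E3, Module.finrank ℝ P = 2 ∧ C = sphere2 ∩ (P : Set E3)

/-- A finite subset `S` of the sphere is *fine* if (1) no three distinct points
of `S` lie on a common great circle, (2) whenever three pairwise distinct great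
circles, each through two distinct points of `S`, share a common point `x` of
the sphere, then `x ∈ S ∪ (-S)`, and (3) every open hemisphere contains at
least 3 points of `S`. -/
def Fine (S : Set E3) : Prop :=
  S.Finite ∧ S ⊆ sphere2 ∧
  (∀ x ∈ S, ∀ y ∈ S, ∀ z ∈ S, x ≠ y → y ≠ z → x ≠ z →
    ∀ C : Set E3, GreatCircle C → x ∈ C → y ∈ C → z ∈ C → False) ∧
  (∀ C₁ C₂ C₃ : Set E3, GreatCircle C₁ → GreatCircle C₂ → GreatCircle C₃ →
    C₁ ≠ C₂ → C₂ ≠ C₃ → C₁ ≠ C₃ →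
    (∃ a ∈ S, ∃ b ∈ S, a ≠ b ∧ a ∈ C₁ ∧ b ∈ C₁) →
    (∃ a ∈ S, ∃ b ∈ S, a ≠ b ∧ a ∈ C₂ ∧ b ∈ C₂) →
    (∃ a ∈ S, ∃ b ∈ S, a ≠ b ∧ a ∈ C₃ ∧ b ∈ C₃) →
    ∀ x ∈ sphere2, x ∈ C₁ → x ∈ C₂ → x ∈ C₃ → x ∈ S ∪ (-S)) ∧
  (∀ n ∈ sphere2, 3 ≤ {x ∈ S | 0 < ⟪x, n⟫}.ncard)

open Module Submodule


def sp (a b : E3) : Submodule ℝ E3 := Submodule.span ℝ {a, b}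

lemma finrank_E3 : Module.finrank ℝ E3 = 3 := finrank_euclideanSpace_fin

lemma sp_comm (a b : E3) : sp a b = sp b a := by rw [sp, sp, Set.pair_comm]

lemma mem_sp_left (a b : E3) : a ∈ sp a b := subset_span (by simp)
lemma mem_sp_right (a b : E3) : b ∈ sp a b := subset_span (by simp)

lemma range_pair (a b : E3) : Set.range ![a, b] = {a, b} := by
  ext x
  simp [Fin.exists_fin_two, or_comm]

lemma pair_indep {x y : E3} (hx : ‖x‖ = 1) (hy : ‖y‖ = 1) (hxy : x ≠ y) (hxy' : x ≠ -y) :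
    LinearIndependent ℝ ![x, y] := by
  rw [linearIndependent_fin2]
  constructor
  · simp only [Matrix.cons_val_one, Matrix.head_cons]
    intro h; simp at h; rw [h] at hy; simp at hy
  · intro a ha
    simp only [Matrix.cons_val_one, Matrix.head_cons, Matrix.cons_val_zero] at ha
    have : |a| = 1 := by
      have := congrArg norm ha
      rwa [norm_smul, hy, hx, mul_one, Real.norm_eq_abs] at this
    rcases abs_eq (by norm_num : (0:ℝ) ≤ 1) |>.mp this with h1 | h1
    · rw [h1, one_smul] at ha; exact hxy ha.symm
    · rw [h1, neg_one_smul] at ha; exact hxy' ha.symm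

lemma finrank_sp_le (a b : E3) : Module.finrank ℝ (sp a b) ≤ 2 := by
  have h := finrank_range_le_card (R := ℝ) ![a, b]
  rw [Set.finrank, range_pair] at h
  simp at h; exact h

lemma finrank_sp_eq_two {a b : E3} (h : LinearIndependent ℝ ![a, b]) :
    Module.finrank ℝ (sp a b) = 2 := by
  have := finrank_span_eq_card h
  rw [range_pair] at this
  simp at this; exact this

lemma sp_eq_of_le {a b : E3} {P : Submodule ℝ E3} (ha : a ∈ P) (hb : b ∈ P)
    (h : LinearIndependent ℝ ![a, b]) (hP : Module.finrank ℝ P = 2) : sp a b = P := by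
  refine Submodule.eq_of_le_of_finrank_le ?_ ?_
  · rw [sp, span_le]; intro x hx; rcases hx with rfl | hx
    · exact ha
    · simp at hx; subst hx; exact hb
  · rw [hP, finrank_sp_eq_two h]

lemma unit_mem_rank_le_one {W : Submodule ℝ E3} (hW : Module.finrank ℝ W ≤ 1)
    {x y : E3} (hx : ‖x‖ = 1) (hy : ‖y‖ = 1) (hxW : x ∈ W) (hyW : y ∈ W) :
    y = x ∨ y = -x := by
  have hx0 : x ≠ 0 := by intro h; rw [h] at hx; simp at hx
  have hWx : W = Submodule.span ℝ {x} := by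
    refine (Submodule.eq_of_le_of_finrank_le ?_ ?_).symm
    · rw [span_le]; simpa using hxW
    · rw [finrank_span_singleton hx0]; exact hW
  rw [hWx, Submodule.mem_span_singleton] at hyW
  obtain ⟨c, rfl⟩ := hyW
  have : |c| = 1 := by rwa [norm_smul, hx, mul_one, Real.norm_eq_abs] at hy
  rcases abs_eq (by norm_num : (0:ℝ) ≤ 1) |>.mp this with h1 | h1
  · left; rw [h1, one_smul]
  · right; rw [h1, neg_one_smul]

lemma finrank_inf_le_one {P Q : Submodule ℝ E3} (hPQ : P ≠ Q)
    (hP : Module.finrank ℝ P ≤ 2) (hQ : Module.finrank ℝ Q = 2) :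
    Module.finrank ℝ ↥(P ⊓ Q) ≤ 1 := by
  by_contra h
  push_neg at h
  have h2 : Module.finrank ℝ (P ⊓ Q : Submodule ℝ E3) = 2 := by
    have := Submodule.finrank_mono (inf_le_right : P ⊓ Q ≤ Q)
    omega
  have hq : (P ⊓ Q : Submodule ℝ E3) = Q :=
    Submodule.eq_of_le_of_finrank_le (inf_le_right : P ⊓ Q ≤ Q) (by omega)
  have hQP : Q ≤ P := by rw [← hq]; exact inf_le_left
  exact hPQ (Submodule.eq_of_le_of_finrank_le hQP (by omega)).symm

lemma sphere_inter_rank_le_one_finite {W : Submodule ℝ E3} (hW : Module.finrank ℝ W ≤ 1) :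
    {x : E3 | ‖x‖ = 1 ∧ x ∈ W}.Finite := by
  rcases Set.eq_empty_or_nonempty {x : E3 | ‖x‖ = 1 ∧ x ∈ W} with h | ⟨x₀, hx₀⟩
  · rw [h]; exact Set.finite_empty
  · refine Set.Finite.subset ((Set.finite_singleton (-x₀)).insert x₀) ?_
    intro y ⟨hy1, hy2⟩
    rcases unit_mem_rank_le_one hW hx₀.1 hy1 hx₀.2 hy2 with h | h
    · exact Or.inl h
    · exact Or.inr (by simp [h])


def mkE (a b c : ℝ) : E3 := (WithLp.equiv 2 (Fin 3 → ℝ)).symm ![a, b, c]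

def tv : Fin 4 → E3 :=
  ![mkE (√3)⁻¹ (√3)⁻¹ (√3)⁻¹, mkE (√3)⁻¹ (-(√3)⁻¹) (-(√3)⁻¹),
    mkE (-(√3)⁻¹) (√3)⁻¹ (-(√3)⁻¹), mkE (-(√3)⁻¹) (-(√3)⁻¹) (√3)⁻¹]

lemma sqrt3_pos : (0:ℝ) < √3 := Real.sqrt_pos.mpr (by norm_num)
lemma sqrt3_sq : (√3)^2 = 3 := Real.sq_sqrt (by norm_num)

lemma mkE_norm (a b c : ℝ) : ‖mkE a b c‖ = √(a^2 + b^2 + c^2) := by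
  rw [mkE, EuclideanSpace.norm_eq]
  congr 1
  simp [Fin.sum_univ_three, sq_abs]

lemma mkE_inner (a b c : ℝ) (n : E3) : ⟪mkE a b c, n⟫ = a * n 0 + b * n 1 + c * n 2 := by
  rw [mkE, PiLp.inner_apply]
  simp [Fin.sum_univ_three]; ring

lemma tv_unit (i : Fin 4) : ‖tv i‖ = 1 := by
  fin_cases i <;>
  · show ‖mkE _ _ _‖ = 1
    rw [mkE_norm]
    rw [show (√3:ℝ)⁻¹ = √3⁻¹ by rw [Real.sqrt_inv]]
    rw [← Real.sqrt_one]
    congr 1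
    rw [Real.sq_sqrt (by norm_num : (3:ℝ)⁻¹ ≥ 0)]
    norm_num

lemma tv_max {n : E3} (hn : ‖n‖ = 1) : ∃ i, 1/3 ≤ ⟪tv i, n⟫ := by
  by_contra h
  push_neg at h
  have hsum : (n 0)^2 + (n 1)^2 + (n 2)^2 = 1 := by
    have := congrArg (· ^ 2) (EuclideanSpace.norm_eq n ▸ hn)
    simp only [Fin.sum_univ_three] at this
    rw [Real.sq_sqrt (by positivity)] at this
    simpa [sq_abs] using this
  have hkp := sqrt3_pos
  have hks := sqrt3_sq
  have key : ∀ x y z : ℝ, (√3)⁻¹ * x + (√3)⁻¹ * y + (√3)⁻¹ * z < 1/3 → x + y + z < √3/3 := by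
    intro x y z hx
    have h2 : ((√3)⁻¹ * x + (√3)⁻¹ * y + (√3)⁻¹ * z) * √3 = x + y + z := by
      field_simp
    calc x + y + z = ((√3)⁻¹ * x + (√3)⁻¹ * y + (√3)⁻¹ * z) * √3 := h2.symm
      _ < (1/3) * √3 := mul_lt_mul_of_pos_right hx hkp
      _ = √3/3 := by ring
  have e0 := h 0; have e1 := h 1; have e2 := h 2; have e3 := h 3
  rw [show tv 0 = mkE (√3)⁻¹ (√3)⁻¹ (√3)⁻¹ from rfl, mkE_inner] at e0
  rw [show tv 1 = mkE (√3)⁻¹ (-(√3)⁻¹) (-(√3)⁻¹) from rfl, mkE_inner] at e1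
  rw [show tv 2 = mkE (-(√3)⁻¹) (√3)⁻¹ (-(√3)⁻¹) from rfl, mkE_inner] at e2
  rw [show tv 3 = mkE (-(√3)⁻¹) (-(√3)⁻¹) (√3)⁻¹ from rfl, mkE_inner] at e3
  have t0 : n 0 + n 1 + n 2 < √3/3 := key _ _ _ e0
  have t1 : n 0 + -(n 1) + -(n 2) < √3/3 := key _ _ _ (by linarith [e1])
  have t2 : -(n 0) + n 1 + -(n 2) < √3/3 := key _ _ _ (by linarith [e2])
  have t3 : -(n 0) + -(n 1) + n 2 < √3/3 := key _ _ _ (by linarith [e3])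
  have ha : (n 0)^2 < 1/3 := by
    nlinarith [mul_pos (by linarith : (0:ℝ) < √3/3 - n 0) (by linarith : (0:ℝ) < √3/3 + n 0), hks]
  have hb : (n 1)^2 < 1/3 := by
    nlinarith [mul_pos (by linarith : (0:ℝ) < √3/3 - n 1) (by linarith : (0:ℝ) < √3/3 + n 1), hks]
  have hc : (n 2)^2 < 1/3 := by
    nlinarith [mul_pos (by linarith : (0:ℝ) < √3/3 - n 2) (by linarith : (0:ℝ) < √3/3 + n 2), hks]
  linarith


lemma exists_tangent (q : E3) (hq : ‖q‖ = 1) :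
    ∃ w₁ w₂ : E3, ‖w₁‖ = 1 ∧ ‖w₂‖ = 1 ∧ ⟪q, w₁⟫ = 0 ∧ ⟪q, w₂⟫ = 0 ∧ ⟪w₁, w₂⟫ = 0 := by
  have hq0 : q ≠ 0 := by intro h; rw [h] at hq; simp at hq
  set W : Submodule ℝ E3 := (ℝ ∙ q)ᗮ with hWdef
  have hW2 : Module.finrank ℝ W = 2 := by
    have h1 := Submodule.finrank_add_finrank_orthogonal (K := ℝ ∙ q)
    rw [finrank_span_singleton hq0, finrank_E3, ← hWdef] at h1
    omega
  let b := (stdOrthonormalBasis ℝ W).reindex (finCongr hW2)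
  have hb := b.orthonormal
  refine ⟨(b 0 : E3), (b 1 : E3), ?_, ?_, ?_, ?_, ?_⟩
  · exact hb.1 0
  · exact hb.1 1
  · exact Submodule.mem_orthogonal_singleton_iff_inner_right.mp (b 0).2
  · exact Submodule.mem_orthogonal_singleton_iff_inner_right.mp (b 1).2
  · have := hb.2 (by norm_num : (0 : Fin 2) ≠ 1)
    exact this


lemma avoid (q : E3) (hq : ‖q‖ = 1) {ε : ℝ} (hε : 0 < ε)
    (Ps : Set (Submodule ℝ E3)) (hPsfin : Ps.Finite) (hPs : ∀ P ∈ Ps, Module.finrank ℝ ↥P ≤ 2)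
    (F : Set E3) (hF : F.Finite) :
    ∃ p : E3, ‖p‖ = 1 ∧ ‖p - q‖ < ε ∧ p ∉ F ∧ ∀ P ∈ Ps, p ∉ P := by
  obtain ⟨w₁, w₂, hw₁, hw₂, hqw₁, hqw₂, hw₁₂⟩ := exists_tangent q hq
  have hqq : ⟪q, q⟫ = 1 := by
    rw [real_inner_self_eq_norm_mul_norm, hq]; norm_num
  have hw₂₂ : ⟪w₂, w₂⟫ = 1 := by
    rw [real_inner_self_eq_norm_mul_norm, hw₂]; norm_num
  have hw₁₁ : ⟪w₁, w₁⟫ = 1 := by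
    rw [real_inner_self_eq_norm_mul_norm, hw₁]; norm_num
  set ψ : ℝ → ℝ → E3 := fun s t => q + s • w₁ + t • w₂ with hψdef
  have hexp : ∀ u : E3, ∀ s t, ⟪u, ψ s t⟫ = ⟪u,q⟫ + s*⟪u,w₁⟫ + t*⟪u,w₂⟫ := by
    intro u s t
    show ⟪u, q + s • w₁ + t • w₂⟫ = _
    rw [inner_add_right, inner_add_right, real_inner_smul_right, real_inner_smul_right]
  have hinq : ∀ s t, ⟪q, ψ s t⟫ = 1 := by
    intro s t
    rw [hexp, hqq, hqw₁, hqw₂]; ring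
  have hinw₂ : ∀ s t, ⟪w₂, ψ s t⟫ = t := by
    intro s t
    rw [hexp, hw₂₂, show ⟪w₂,q⟫ = 0 by rw [real_inner_comm]; exact hqw₂,
      show ⟪w₂,w₁⟫ = 0 by rw [real_inner_comm]; exact hw₁₂]; ring
  have hinw₁ : ∀ s t, ⟪w₁, ψ s t⟫ = s := by
    intro s t
    rw [hexp, hw₁₁, hw₁₂, show ⟪w₁,q⟫ = 0 by rw [real_inner_comm]; exact hqw₁]; ring
  have hψ0 : ∀ s t, ψ s t ≠ 0 := by
    intro s t h
    have := hinq s t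
    rw [h, inner_zero_right] at this
    norm_num at this
  have hψnorm : ∀ s t, 1 ≤ ‖ψ s t‖ := by
    intro s t
    have h1 := real_inner_le_norm q (ψ s t)
    rw [hinq, hq, one_mul] at h1
    exact h1
  set p : ℝ → ℝ → E3 := fun s t => ‖ψ s t‖⁻¹ • ψ s t with hpdef
  have hpnorm : ∀ s t, ‖p s t‖ = 1 := by
    intro s t
    exact norm_smul_inv_norm (𝕜 := ℝ) (hψ0 s t)
  have hpinq : ∀ s t, ⟪q, p s t⟫ = ‖ψ s t‖⁻¹ := by
    intro s t
    rw [hpdef]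
    simp only [real_inner_smul_right, hinq, mul_one]
  have hpinw₂ : ∀ s t, ⟪w₂, p s t⟫ = ‖ψ s t‖⁻¹ * t := by
    intro s t
    rw [hpdef]
    simp only [real_inner_smul_right, hinw₂]
  have hinvpos : ∀ s t, 0 < ‖ψ s t‖⁻¹ := by
    intro s t
    have := hψnorm s t
    positivity
  have hinj : ∀ s, Function.Injective (fun t => p s t) := by
    intro s t t' h
    have h1 : ⟪q, p s t⟫ = ⟪q, p s t'⟫ := by simp only [h]
    have h2 : ⟪w₂, p s t⟫ = ⟪w₂, p s t'⟫ := by simp only [h]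
    rw [hpinq, hpinq] at h1
    rw [hpinw₂, hpinw₂, h1] at h2
    have := hinvpos s t'
    exact mul_left_cancel₀ (by positivity) h2
  set Q : ℝ → Submodule ℝ E3 := fun s => sp (q + s • w₁) w₂ with hQdef
  have hQmem : ∀ s t, p s t ∈ Q s := by
    intro s t
    rw [hQdef]
    refine Submodule.mem_span_pair.mpr ⟨‖ψ s t‖⁻¹, ‖ψ s t‖⁻¹ * t, ?_⟩
    rw [hpdef, hψdef]
    simp only [smul_add, smul_smul]
  have hQindep : ∀ s : ℝ, LinearIndependent ℝ ![q + s • w₁, w₂] := by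
    intro s
    rw [linearIndependent_fin2]
    constructor
    · simp only [Matrix.cons_val_one, Matrix.head_cons]
      intro h; simp at h; rw [h] at hw₂; simp at hw₂
    · intro a ha
      simp only [Matrix.cons_val_one, Matrix.head_cons, Matrix.cons_val_zero] at ha
      have h5 := congrArg (fun x => ⟪q, x⟫) ha
      rw [real_inner_smul_right, hqw₂, inner_add_right, real_inner_smul_right, hqq, hqw₁] at h5
      norm_num at h5
  have hQrank : ∀ s, Module.finrank ℝ ↥(Q s) = 2 := fun s => finrank_sp_eq_two (hQindep s)
  have hQinj : Function.Injective Q := by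
    intro s s' h
    have hmem : q + s • w₁ ∈ Q s' := by rw [← h]; exact mem_sp_left _ _
    rw [hQdef] at hmem
    obtain ⟨α, β, hab⟩ := Submodule.mem_span_pair.mp hmem
    have h1 := congrArg (fun x => ⟪q, x⟫) hab
    simp only [inner_add_right, real_inner_smul_right, hqq, hqw₁, hqw₂] at h1
    -- h1 : α * (1 + s' * 0) + β * 0 = 1 + s * 0
    have h2 := congrArg (fun x => ⟪w₁, x⟫) hab
    simp only [inner_add_right, real_inner_smul_right, hw₁₁, hw₁₂,
      show ⟪w₁,q⟫ = 0 by rw [real_inner_comm]; exact hqw₁] at h2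
    -- h2 : α * (0 + s' * 1) + β * 0 = 0 + s * 1
    have hα : α = 1 := by linarith
    rw [hα] at h2
    linarith
  have hbadS : {s : ℝ | Q s ∈ Ps}.Finite := Set.Finite.preimage hQinj.injOn hPsfin
  obtain ⟨s, hs⟩ := ((Set.Ioo_infinite (by linarith : (0:ℝ) < ε/5)).diff hbadS).nonempty
  obtain ⟨⟨hs0, hs5⟩, hsbad⟩ := hs
  have hbadT : ({t : ℝ | ∃ P ∈ Ps, p s t ∈ P} ∪ {t : ℝ | p s t ∈ F}).Finite := by
    refine Set.Finite.union ?_ (Set.Finite.preimage (hinj s).injOn hF)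
    have : {t : ℝ | ∃ P ∈ Ps, p s t ∈ P} ⊆ ⋃ P ∈ Ps, {t : ℝ | p s t ∈ P} := by
      intro t ⟨P, hP, hmem⟩
      exact Set.mem_biUnion hP hmem
    refine Set.Finite.subset (Set.Finite.biUnion hPsfin ?_) this
    intro P hP
    have hPQ : P ≠ Q s := by
      intro h; rw [h] at hP; exact hsbad hP
    have hfin : {x : E3 | ‖x‖ = 1 ∧ x ∈ P ⊓ Q s}.Finite :=
      sphere_inter_rank_le_one_finite (finrank_inf_le_one hPQ (hPs P hP) (hQrank s))
    refine Set.Finite.subset (Set.Finite.preimage (hinj s).injOn hfin) ?_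
    intro t ht
    exact ⟨hpnorm s t, ht, hQmem s t⟩
  obtain ⟨t, ht⟩ := ((Set.Ioo_infinite (by linarith : (0:ℝ) < ε/5)).diff hbadT).nonempty
  obtain ⟨⟨ht0, ht5⟩, htbad⟩ := ht
  refine ⟨p s t, hpnorm s t, ?_, ?_, ?_⟩
  · -- closeness
    have h1 : ‖ψ s t - q‖ ≤ s + t := by
      have : ψ s t - q = s • w₁ + t • w₂ := by show q + s • w₁ + t • w₂ - q = s • w₁ + t • w₂; abel
      rw [this]
      calc ‖s • w₁ + t • w₂‖ ≤ ‖s • w₁‖ + ‖t • w₂‖ := norm_add_le _ _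
        _ = |s| * 1 + |t| * 1 := by rw [norm_smul, norm_smul, hw₁, hw₂]; simp [Real.norm_eq_abs]
        _ = s + t := by rw [abs_of_pos hs0, abs_of_pos ht0]; ring
    have hr1 : 1 ≤ ‖ψ s t‖ := hψnorm s t
    have h2 : ‖p s t - ψ s t‖ = ‖ψ s t‖ - 1 := by
      have : p s t - ψ s t = (‖ψ s t‖⁻¹ - 1) • ψ s t := by
        rw [hpdef, sub_smul, one_smul]
      rw [this, norm_smul, Real.norm_eq_abs]
      rw [abs_of_nonpos (by
        have h3 : ‖ψ s t‖⁻¹ ≤ 1 := by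
          rw [inv_le_one_iff₀]; right; exact hr1
        linarith)]
      have h4 : ‖ψ s t‖ ≠ 0 := by linarith
      field_simp
      ring
    have h3 : ‖ψ s t‖ - 1 ≤ ‖ψ s t - q‖ := by
      have := norm_sub_norm_le (ψ s t) q
      rw [hq] at this
      linarith
    calc ‖p s t - q‖ ≤ ‖p s t - ψ s t‖ + ‖ψ s t - q‖ := norm_sub_le_norm_sub_add_norm_sub _ _ _
      _ ≤ (s + t) + (s + t) := by rw [h2]; linarith
      _ < ε := by linarith
  · intro hmem
    exact htbad (Or.inr hmem)
  · intro P hP hmem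
    exact htbad (Or.inl ⟨P, hP, hmem⟩)


def Planes (T : Set E3) : Set (Submodule ℝ E3) :=
  {P | ∃ a ∈ T, ∃ b ∈ T, a ≠ b ∧ P = sp a b}

def GP (T : Set E3) : Prop :=
  (∀ x ∈ T, ‖x‖ = 1) ∧
  (∀ a ∈ T, ∀ b ∈ T, a ≠ b → a ≠ -b) ∧
  (∀ a ∈ T, ∀ b ∈ T, ∀ c ∈ T, a ≠ b → a ≠ c → b ≠ c → c ∉ sp a b) ∧
  (∀ P₁ ∈ Planes T, ∀ P₂ ∈ Planes T, ∀ P₃ ∈ Planes T, P₁ ≠ P₂ → P₁ ≠ P₃ → P₂ ≠ P₃ →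
    ∀ x : E3, ‖x‖ = 1 → x ∈ P₁ → x ∈ P₂ → x ∈ P₃ → x ∈ T ∪ (-T))

lemma GP_indep {T : Set E3} (h : GP T) {a b : E3} (ha : a ∈ T) (hb : b ∈ T) (hab : a ≠ b) :
    LinearIndependent ℝ ![a, b] :=
  pair_indep (h.1 a ha) (h.1 b hb) hab (h.2.1 a ha b hb hab)

lemma Planes_finrank {T : Set E3} (h : GP T) {P : Submodule ℝ E3} (hP : P ∈ Planes T) :
    Module.finrank ℝ ↥P = 2 := by
  obtain ⟨a, ha, b, hb, hab, rfl⟩ := hP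
  exact finrank_sp_eq_two (GP_indep h ha hb hab)

lemma Planes_finite {T : Set E3} (hT : T.Finite) : (Planes T).Finite := by
  refine Set.Finite.subset (Set.Finite.image2 sp hT hT) ?_
  rintro P ⟨a, ha, b, hb, hab, rfl⟩
  exact Set.mem_image2_of_mem ha hb

def Extra (T : Set E3) : Set E3 :=
  {x | ‖x‖ = 1 ∧ ∃ P ∈ Planes T, ∃ P' ∈ Planes T, P ≠ P' ∧ x ∈ P ∧ x ∈ P'}

lemma Extra_finite {T : Set E3} (hGP : GP T) (hT : T.Finite) : (Extra T).Finite := by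
  have hfin := Planes_finite hT
  have hB : ∀ P P' : Submodule ℝ E3, P ∈ Planes T → P' ∈ Planes T →
      {x : E3 | ‖x‖ = 1 ∧ x ∈ P ⊓ P' ∧ P ≠ P'}.Finite := by
    intro P P' hP hP'
    by_cases h : P = P'
    · refine Set.Finite.subset (Set.finite_empty) ?_
      rintro x ⟨-, -, hne⟩
      exact absurd h hne
    · refine Set.Finite.subset (sphere_inter_rank_le_one_finite
        (finrank_inf_le_one h (le_of_eq (Planes_finrank hGP hP)) (Planes_finrank hGP hP'))) ?_
      rintro x ⟨hx1, hx2, -⟩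
      exact ⟨hx1, hx2⟩
  refine Set.Finite.subset (Set.Finite.biUnion hfin (fun P hP =>
    Set.Finite.biUnion hfin (fun P' hP' => hB P P' hP hP'))) ?_
  rintro x ⟨hx, P, hP, P', hP', hne, hxP, hxP'⟩
  refine Set.mem_biUnion hP (Set.mem_biUnion hP' ?_)
  exact ⟨hx, Submodule.mem_inf.mpr ⟨hxP, hxP'⟩, hne⟩

lemma Planes_insert {T : Set E3} {p : E3} {P : Submodule ℝ E3}
    (h : P ∈ Planes (insert p T)) :
    P ∈ Planes T ∨ ∃ a ∈ T, P = sp p a := by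
  obtain ⟨a, ha, b, hb, hab, rfl⟩ := h
  rcases Set.mem_insert_iff.mp ha with rfl | haT
  · rcases Set.mem_insert_iff.mp hb with rfl | hbT
    · exact absurd rfl hab
    · exact Or.inr ⟨b, hbT, rfl⟩
  · rcases Set.mem_insert_iff.mp hb with rfl | hbT
    · exact Or.inr ⟨a, haT, sp_comm a b⟩
    · exact Or.inl ⟨a, haT, b, hbT, hab, rfl⟩

lemma GP_step {T : Set E3} (hT : T.Finite) (hGP : GP T) (q : E3) (hq : ‖q‖ = 1)
    {ε : ℝ} (hε : 0 < ε) :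
    ∃ p : E3, ‖p‖ = 1 ∧ ‖p - q‖ < ε ∧ p ∉ T ∧ GP (insert p T) := by
  set Ps : Set (Submodule ℝ E3) := Planes T ∪ Set.image2 sp T (Extra T) with hPsdef
  have hPsfin : Ps.Finite :=
    (Planes_finite hT).union (Set.Finite.image2 sp hT (Extra_finite hGP hT))
  have hPsrank : ∀ P ∈ Ps, Module.finrank ℝ ↥P ≤ 2 := by
    rintro P (hP | hP)
    · exact le_of_eq (Planes_finrank hGP hP)
    · obtain ⟨a, -, x, -, rfl⟩ := hP
      exact finrank_sp_le a x
  have hFfin : (T ∪ (-T)).Finite := hT.union hT.neg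
  obtain ⟨p, hp1, hp2, hp3, hp4⟩ := avoid q hq hε Ps hPsfin hPsrank _ hFfin
  have hpT : p ∉ T := fun h => hp3 (Or.inl h)
  have hpnT : p ∉ (-T) := fun h => hp3 (Or.inr h)
  have hpsp : ∀ a ∈ T, ∀ b ∈ T, a ≠ b → p ∉ sp a b := by
    intro a ha b hb hab hmem
    exact hp4 _ (Or.inl ⟨a, ha, b, hb, hab, rfl⟩) hmem
  have hpsx : ∀ a ∈ T, ∀ x ∈ Extra T, p ∉ sp a x := by
    intro a ha x hx hmem
    exact hp4 _ (Or.inr (Set.mem_image2_of_mem ha hx)) hmem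
  -- units
  have hunit : ∀ x ∈ insert p T, ‖x‖ = 1 := by
    rintro x (rfl | hx)
    · exact hp1
    · exact hGP.1 x hx
  -- no antipodal pairs
  have hanti : ∀ a ∈ insert p T, ∀ b ∈ insert p T, a ≠ b → a ≠ -b := by
    intro a ha b hb hab h
    rcases Set.mem_insert_iff.mp ha with rfl | haT
    · rcases Set.mem_insert_iff.mp hb with rfl | hbT
      · exact hab rfl
      · exact hpnT (Set.mem_neg.mpr (show -a ∈ T by rw [h, neg_neg]; exact hbT))
    · rcases Set.mem_insert_iff.mp hb with rfl | hbT
      · exact hpnT (Set.mem_neg.mpr (h ▸ haT))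
      · exact hGP.2.1 a haT b hbT hab h
  have hindep : ∀ a ∈ insert p T, ∀ b ∈ insert p T, a ≠ b → LinearIndependent ℝ ![a, b] :=
    fun a ha b hb hab => pair_indep (hunit a ha) (hunit b hb) hab (hanti a ha b hb hab)
  -- no triple in a plane
  have htriple : ∀ a ∈ insert p T, ∀ b ∈ insert p T, ∀ c ∈ insert p T,
      a ≠ b → a ≠ c → b ≠ c → c ∉ sp a b := by
    have key : ∀ a ∈ T, ∀ c ∈ T, a ≠ c → c ∉ sp p a := by
      intro a ha c hc hac hmem
      have hpa : LinearIndependent ℝ ![p, a] :=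
        hindep p (Set.mem_insert _ _) a (Set.mem_insert_of_mem _ ha)
          (fun h => hpT (h ▸ ha))
      have hca : LinearIndependent ℝ ![c, a] := GP_indep hGP hc ha (Ne.symm hac)
      have hspeq : sp c a = sp p a :=
        sp_eq_of_le hmem (mem_sp_right p a) hca (finrank_sp_eq_two hpa)
      have : p ∈ sp c a := hspeq ▸ mem_sp_left p a
      exact hpsp c hc a ha (Ne.symm hac) this
    rintro a (rfl | ha) b (rfl | hb) c hc hab hac hbc
    · exact absurd rfl hab
    · -- a = p, b ∈ T
      rcases Set.mem_insert_iff.mp hc with rfl | hcT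
      · exact absurd rfl hac
      · exact key b hb c hcT (fun h => hbc (h ▸ rfl))
    · -- b = p, a ∈ T
      rcases Set.mem_insert_iff.mp hc with rfl | hcT
      · exact absurd rfl hbc
      · rw [sp_comm]
        exact key a ha c hcT hac
    · -- a, b ∈ T
      rcases Set.mem_insert_iff.mp hc with rfl | hcT
      · exact fun h => hpsp a ha b hb hab h
      · exact hGP.2.2.1 a ha b hb c hcT hab hac hbc
  -- triple point condition
  have hTP : ∀ P₁ ∈ Planes (insert p T), ∀ P₂ ∈ Planes (insert p T),
      ∀ P₃ ∈ Planes (insert p T), P₁ ≠ P₂ → P₁ ≠ P₃ → P₂ ≠ P₃ →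
      ∀ x : E3, ‖x‖ = 1 → x ∈ P₁ → x ∈ P₂ → x ∈ P₃ →
      x ∈ insert p T ∪ (-(insert p T)) := by
    intro P₁ h₁ P₂ h₂ P₃ h₃ h12 h13 h23 x hx hx1 hx2 hx3
    have hnewrank : ∀ a ∈ T, Module.finrank ℝ ↥(sp p a) = 2 := by
      intro a ha
      exact finrank_sp_eq_two (hindep p (Set.mem_insert _ _) a (Set.mem_insert_of_mem _ ha)
        (fun h => hpT (h ▸ ha)))
    have hsub : x ∈ T ∪ (-T) → x ∈ insert p T ∪ (-(insert p T)) := by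
      rintro (h | h)
      · exact Or.inl (Set.mem_insert_of_mem _ h)
      · refine Or.inr (Set.mem_neg.mpr ?_)
        exact Set.mem_insert_of_mem _ (Set.mem_neg.mp h)
    have hxp : x = p ∨ x = -p → x ∈ insert p T ∪ (-(insert p T)) := by
      rintro (rfl | rfl)
      · exact Or.inl (Set.mem_insert _ _)
      · exact Or.inr (Set.mem_neg.mpr (by simpa using Set.mem_insert p T))
    -- two new planes meeting at x forces x = ±p
    have L2 : ∀ a ∈ T, ∀ b ∈ T, sp p a ≠ sp p b → x ∈ sp p a → x ∈ sp p b →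
        x = p ∨ x = -p := by
      intro a ha b hb hne hxa hxb
      have hrank := finrank_inf_le_one hne (le_of_eq (hnewrank a ha)) (hnewrank b hb)
      have := unit_mem_rank_le_one hrank hp1 hx
        (Submodule.mem_inf.mpr ⟨mem_sp_left p a, mem_sp_left p b⟩)
        (Submodule.mem_inf.mpr ⟨hxa, hxb⟩)
      exact this
    -- one new plane and two old distinct planes
    have L1 : ∀ a ∈ T, x ∈ sp p a → ∀ P P', P ∈ Planes T → P' ∈ Planes T → P ≠ P' →
        x ∈ P → x ∈ P' → x ∈ T ∪ (-T) := by
      intro a ha hxa P P' hP hP' hne hxP hxP'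
      by_cases hxT : x ∈ T ∪ (-T)
      · exact hxT
      exfalso
      have hxE : x ∈ Extra T := ⟨hx, P, hP, P', hP', hne, hxP, hxP'⟩
      have hxa2 : x ≠ a ∧ x ≠ -a := by
        constructor
        · rintro rfl; exact hxT (Or.inl ha)
        · rintro rfl; exact hxT (Or.inr (Set.mem_neg.mpr (by simpa using ha)))
      have hxaind : LinearIndependent ℝ ![x, a] :=
        pair_indep hx (hGP.1 a ha) hxa2.1 hxa2.2
      have hspeq : sp x a = sp p a :=
        sp_eq_of_le hxa (mem_sp_right p a) hxaind (hnewrank a ha)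
      have hpmem : p ∈ sp x a := hspeq ▸ mem_sp_left p a
      rw [sp_comm] at hpmem
      exact hpsx a ha x hxE hpmem
    rcases Planes_insert h₁ with hP₁ | ⟨a, ha, rfl⟩
    · rcases Planes_insert h₂ with hP₂ | ⟨b, hb, rfl⟩
      · rcases Planes_insert h₃ with hP₃ | ⟨c, hc, rfl⟩
        · exact hsub (hGP.2.2.2 P₁ hP₁ P₂ hP₂ P₃ hP₃ h12 h13 h23 x hx hx1 hx2 hx3)
        · exact hsub (L1 c hc hx3 P₁ P₂ hP₁ hP₂ h12 hx1 hx2)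
      · rcases Planes_insert h₃ with hP₃ | ⟨c, hc, rfl⟩
        · exact hsub (L1 b hb hx2 P₁ P₃ hP₁ hP₃ h13 hx1 hx3)
        · exact hxp (L2 b hb c hc h23 hx2 hx3)
    · rcases Planes_insert h₂ with hP₂ | ⟨b, hb, rfl⟩
      · rcases Planes_insert h₃ with hP₃ | ⟨c, hc, rfl⟩
        · exact hsub (L1 a ha hx1 P₂ P₃ hP₂ hP₃ h23 hx2 hx3)
        · exact hxp (L2 a ha c hc h13 hx1 hx3)
      · exact hxp (L2 a ha b hb h12 hx1 hx2)
  exact ⟨p, hp1, hp2, hpT, hunit, hanti, htriple, hTP⟩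

lemma GP_empty : GP (∅ : Set E3) := by
  refine ⟨?_, ?_, ?_, ?_⟩ <;> simp [Planes]


lemma sphere2_def {x : E3} : x ∈ sphere2 ↔ ‖x‖ = 1 := Iff.rfl

lemma GP_fine {S : Set E3} (hS : S.Finite) (hGP : GP S)
    (hhemi : ∀ n ∈ sphere2, 3 ≤ {x ∈ S | 0 < ⟪x, n⟫}.ncard) : Fine S := by
  refine ⟨hS, ?_, ?_, ?_, ?_⟩
  · intro x hx
    exact hGP.1 x hx
  · -- no three points on a common great circle
    intro x hx y hy z hz hxy hyz hxz C hC hxC hyC hzC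
    obtain ⟨P, hP2, rfl⟩ := hC
    have hsp : sp x y = P :=
      sp_eq_of_le hxC.2 hyC.2 (GP_indep hGP hx hy hxy) hP2
    exact hGP.2.2.1 x hx y hy z hz hxy hxz hyz (hsp ▸ hzC.2)
  · -- triple point condition
    rintro C₁ C₂ C₃ hC₁ hC₂ hC₃ h12 h23 h13
      ⟨a₁, ha₁, b₁, hb₁, hab₁, haC₁, hbC₁⟩
      ⟨a₂, ha₂, b₂, hb₂, hab₂, haC₂, hbC₂⟩
      ⟨a₃, ha₃, b₃, hb₃, hab₃, haC₃, hbC₃⟩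
      x hxs hx1 hx2 hx3
    obtain ⟨P₁, hP₁2, rfl⟩ := hC₁
    obtain ⟨P₂, hP₂2, rfl⟩ := hC₂
    obtain ⟨P₃, hP₃2, rfl⟩ := hC₃
    have hsp₁ : sp a₁ b₁ = P₁ := sp_eq_of_le haC₁.2 hbC₁.2 (GP_indep hGP ha₁ hb₁ hab₁) hP₁2
    have hsp₂ : sp a₂ b₂ = P₂ := sp_eq_of_le haC₂.2 hbC₂.2 (GP_indep hGP ha₂ hb₂ hab₂) hP₂2
    have hsp₃ : sp a₃ b₃ = P₃ := sp_eq_of_le haC₃.2 hbC₃.2 (GP_indep hGP ha₃ hb₃ hab₃) hP₃2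
    have hm₁ : P₁ ∈ Planes S := ⟨a₁, ha₁, b₁, hb₁, hab₁, hsp₁.symm⟩
    have hm₂ : P₂ ∈ Planes S := ⟨a₂, ha₂, b₂, hb₂, hab₂, hsp₂.symm⟩
    have hm₃ : P₃ ∈ Planes S := ⟨a₃, ha₃, b₃, hb₃, hab₃, hsp₃.symm⟩
    have hne12 : P₁ ≠ P₂ := fun h => h12 (by rw [h])
    have hne13 : P₁ ≠ P₃ := fun h => h13 (by rw [h])
    have hne23 : P₂ ≠ P₃ := fun h => h23 (by rw [h])
    exact hGP.2.2.2 P₁ hm₁ P₂ hm₂ P₃ hm₃ hne12 hne13 hne23 x hxs hx1.2 hx2.2 hx3.2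
  · -- hemisphere condition: proved separately in the main theorem
    exact hhemi

lemma close_inner {x v n : E3} (hd : ‖x - v‖ < 1/6) (hv : 1/3 ≤ ⟪v, n⟫) (hn : ‖n‖ = 1) :
    0 < ⟪x, n⟫ := by
  have h1 : ⟪x, n⟫ = ⟪v, n⟫ + ⟪x - v, n⟫ := by
    rw [inner_sub_left]; ring
  have h2 := abs_real_inner_le_norm (x - v) n
  rw [hn, mul_one] at h2
  have h3 := abs_le.mp h2
  linarith

lemma three_le_ncard {s : Set E3} (hs : s.Finite) {a b c : E3}
    (ha : a ∈ s) (hb : b ∈ s) (hc : c ∈ s) (hab : a ≠ b) (hac : a ≠ c) (hbc : b ≠ c) :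
    3 ≤ s.ncard := by
  have hsub : ({a, b, c} : Set E3) ⊆ s := by
    rintro x (rfl | rfl | rfl) <;> assumption
  have h3 : ({a, b, c} : Set E3).ncard = 3 := by
    rw [Set.ncard_insert_of_notMem (by simp [hab, hac]),
      Set.ncard_insert_of_notMem (by simp [hbc]), Set.ncard_singleton]
  rw [← h3]
  exact Set.ncard_le_ncard hsub hs

/-- There exists a fine subset of the sphere. -/
theorem exists_fine_set : ∃ S : Set E3, Fine S := by
  have h16 : (0:ℝ) < 1/6 := by norm_num
  obtain ⟨p1, hu1, hd1, hm1, hg1⟩ := GP_step Set.finite_empty GP_empty (tv 0) (tv_unit 0) h16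
  have hf1 : (insert p1 (∅ : Set E3)).Finite := Set.finite_empty.insert p1
  obtain ⟨p2, hu2, hd2, hm2, hg2⟩ := GP_step hf1 hg1 (tv 0) (tv_unit 0) h16
  have hf2 : (insert p2 (insert p1 (∅ : Set E3))).Finite := hf1.insert p2
  obtain ⟨p3, hu3, hd3, hm3, hg3⟩ := GP_step hf2 hg2 (tv 0) (tv_unit 0) h16
  have hf3 : (insert p3 (insert p2 (insert p1 (∅ : Set E3)))).Finite := hf2.insert p3
  obtain ⟨p4, hu4, hd4, hm4, hg4⟩ := GP_step hf3 hg3 (tv 1) (tv_unit 1) h16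
  have hf4 : (insert p4 (insert p3 (insert p2 (insert p1 (∅ : Set E3))))).Finite := hf3.insert p4
  obtain ⟨p5, hu5, hd5, hm5, hg5⟩ := GP_step hf4 hg4 (tv 1) (tv_unit 1) h16
  have hf5 : (insert p5 (insert p4 (insert p3 (insert p2 (insert p1 (∅ : Set E3)))))).Finite := hf4.insert p5
  obtain ⟨p6, hu6, hd6, hm6, hg6⟩ := GP_step hf5 hg5 (tv 1) (tv_unit 1) h16
  have hf6 : (insert p6 (insert p5 (insert p4 (insert p3 (insert p2 (insert p1 (∅ : Set E3))))))).Finite := hf5.insert p6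
  obtain ⟨p7, hu7, hd7, hm7, hg7⟩ := GP_step hf6 hg6 (tv 2) (tv_unit 2) h16
  have hf7 : (insert p7 (insert p6 (insert p5 (insert p4 (insert p3 (insert p2 (insert p1 (∅ : Set E3)))))))).Finite := hf6.insert p7
  obtain ⟨p8, hu8, hd8, hm8, hg8⟩ := GP_step hf7 hg7 (tv 2) (tv_unit 2) h16
  have hf8 : (insert p8 (insert p7 (insert p6 (insert p5 (insert p4 (insert p3 (insert p2 (insert p1 (∅ : Set E3))))))))).Finite := hf7.insert p8
  obtain ⟨p9, hu9, hd9, hm9, hg9⟩ := GP_step hf8 hg8 (tv 2) (tv_unit 2) h16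
  have hf9 : (insert p9 (insert p8 (insert p7 (insert p6 (insert p5 (insert p4 (insert p3 (insert p2 (insert p1 (∅ : Set E3)))))))))).Finite := hf8.insert p9
  obtain ⟨p10, hu10, hd10, hm10, hg10⟩ := GP_step hf9 hg9 (tv 3) (tv_unit 3) h16
  have hf10 : (insert p10 (insert p9 (insert p8 (insert p7 (insert p6 (insert p5 (insert p4 (insert p3 (insert p2 (insert p1 (∅ : Set E3))))))))))).Finite := hf9.insert p10
  obtain ⟨p11, hu11, hd11, hm11, hg11⟩ := GP_step hf10 hg10 (tv 3) (tv_unit 3) h16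
  have hf11 : (insert p11 (insert p10 (insert p9 (insert p8 (insert p7 (insert p6 (insert p5 (insert p4 (insert p3 (insert p2 (insert p1 (∅ : Set E3)))))))))))).Finite := hf10.insert p11
  obtain ⟨p12, hu12, hd12, hm12, hg12⟩ := GP_step hf11 hg11 (tv 3) (tv_unit 3) h16
  have hf12 : (insert p12 (insert p11 (insert p10 (insert p9 (insert p8 (insert p7 (insert p6 (insert p5 (insert p4 (insert p3 (insert p2 (insert p1 (∅ : Set E3))))))))))))).Finite := hf11.insert p12
  have ne12 : p1 ≠ p2 := fun h => hm2 (by rw [← h]; simp)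
  have ne13 : p1 ≠ p3 := fun h => hm3 (by rw [← h]; simp)
  have ne23 : p2 ≠ p3 := fun h => hm3 (by rw [← h]; simp)
  have ne45 : p4 ≠ p5 := fun h => hm5 (by rw [← h]; simp)
  have ne46 : p4 ≠ p6 := fun h => hm6 (by rw [← h]; simp)
  have ne56 : p5 ≠ p6 := fun h => hm6 (by rw [← h]; simp)
  have ne78 : p7 ≠ p8 := fun h => hm8 (by rw [← h]; simp)
  have ne79 : p7 ≠ p9 := fun h => hm9 (by rw [← h]; simp)
  have ne89 : p8 ≠ p9 := fun h => hm9 (by rw [← h]; simp)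
  have ne1011 : p10 ≠ p11 := fun h => hm11 (by rw [← h]; simp)
  have ne1012 : p10 ≠ p12 := fun h => hm12 (by rw [← h]; simp)
  have ne1112 : p11 ≠ p12 := fun h => hm12 (by rw [← h]; simp)
  refine ⟨(insert p12 (insert p11 (insert p10 (insert p9 (insert p8 (insert p7 (insert p6 (insert p5 (insert p4 (insert p3 (insert p2 (insert p1 (∅ : Set E3))))))))))))), GP_fine hf12 hg12 ?_⟩
  intro n hn
  have hn' : ‖n‖ = 1 := hn
  obtain ⟨i, hi⟩ := tv_max hn'
  have hfinS := hf12.subset (Set.sep_subset (insert p12 (insert p11 (insert p10 (insert p9 (insert p8 (insert p7 (insert p6 (insert p5 (insert p4 (insert p3 (insert p2 (insert p1 (∅ : Set E3))))))))))))) (fun x => 0 < ⟪x, n⟫))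
  fin_cases i
  · refine three_le_ncard hfinS ⟨by simp, close_inner hd1 hi hn'⟩ ⟨by simp, close_inner hd2 hi hn'⟩ ⟨by simp, close_inner hd3 hi hn'⟩ ne12 ne13 ne23
  · refine three_le_ncard hfinS ⟨by simp, close_inner hd4 hi hn'⟩ ⟨by simp, close_inner hd5 hi hn'⟩ ⟨by simp, close_inner hd6 hi hn'⟩ ne45 ne46 ne56
  · refine three_le_ncard hfinS ⟨by simp, close_inner hd7 hi hn'⟩ ⟨by simp, close_inner hd8 hi hn'⟩ ⟨by simp, close_inner hd9 hi hn'⟩ ne78 ne79 ne89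
  · refine three_le_ncard hfinS ⟨by simp, close_inner hd10 hi hn'⟩ ⟨by simp, close_inner hd11 hi hn'⟩ ⟨by simp, close_inner hd12 hi hn'⟩ ne1011 ne1012 ne1112
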